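/- Fix an integer d ≥ 1, ε > 0, positive integers m and s, and a vector v ∈ ℤ^d. Let p = P_{Y ∼ Lap_ℤ(d/ε)}[|Y| ≥ m], and assume 0 < p < 1. Consider two distributions on ℤ^d: (A) sample ω uniformly from {m, 2m, ..., sm} and η₁, ..., η_d i.i.d. from Lap_ℤ(d/ε), and output (⌊v_i + ω + η_i⌋_{ms})_{i=1}^d; (B) sample a random subset J ⊆ {1, ..., d} by including each index independently with probability p, sample ω uniformly from {m, 2m, ..., sm}, and for each i independently: if i ∈ J, sample η_i from Lap_ℤ(d/ε) conditioned on |η_i| ≥ m and set y_i = ⌊v_i + ω + η_i⌋_{ms}; if i ∉ J and ⌊v_i + ω − m⌋_{ms} = ⌊v_i + ω + m⌋_{ms}, set y_i = ⌊v_i + ω − m⌋_{ms}; otherwise sample η_i from Lap_ℤ(d/ε) conditioned on |η_i| < m and set y_i = ⌊v_i + ω + η_i⌋_{ms}; output (y₁, ..., y_d). Then distributions (A) and (B) are equal. -/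

import Mathlib

open scoped ENNReal

/-- `rdown k z` rounds the integer `z` down to the nearest multiple of `k`. -/
def rdown (k : ℕ) (z : ℤ) : ℤ := z - z % (k : ℤ)

lemma rdown_eq' (k : ℕ) (z : ℤ) : rdown k z = k * (z / k) := by
  simp [rdown, Int.emod_def]

lemma rdown_mono' (k : ℕ) (hk : 0 < k) : Monotone (rdown k) := fun a b h => by
  simp only [rdown_eq']
  exact mul_le_mul_of_nonneg_left (Int.ediv_le_ediv (by exact_mod_cast hk) h) (by positivity)

lemma rdown_between' {k : ℕ} (hk : 0 < k) {a b x : ℤ} (hab : rdown k a = rdown k b)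
    (h1 : a ≤ x) (h2 : x ≤ b) : rdown k x = rdown k a :=
  le_antisymm (hab ▸ rdown_mono' k hk h2) (rdown_mono' k hk h1)

theorem stmt19 (d : ℕ) (hd : 1 ≤ d) (ε : ℝ) (hε : 0 < ε) (m s : ℕ)
    (hm : 0 < m) (hs : 0 < s) (v : Fin d → ℤ)
    (L : PMF ℤ)
    (hL : ∀ x : ℤ, L x = ENNReal.ofReal
      ((Real.exp (1 / ((d : ℝ) / ε)) - 1) / (Real.exp (1 / ((d : ℝ) / ε)) + 1) *
        Real.exp (-|(x : ℝ)| / ((d : ℝ) / ε))))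
    (p : ℝ≥0∞) (hp : p = L.toOuterMeasure {z : ℤ | (m : ℤ) ≤ |z|})
    (hp0 : 0 < p) (hp1 : p < 1)
    (Lge : PMF ℤ)
    (hLge : ∀ η : ℤ, Lge η = (if (m : ℤ) ≤ |η| then L η else 0) / p)
    (Llt : PMF ℤ)
    (hLlt : ∀ η : ℤ, Llt η = (if |η| < (m : ℤ) then L η else 0) / (1 - p))
    (A B : PMF (Fin d → ℤ))
    (hA : ∀ y : Fin d → ℤ, A y = (s : ℝ≥0∞)⁻¹ * ∑ j ∈ Finset.Icc 1 s, ∏ i,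
      ∑' η : ℤ, if rdown (m * s) (v i + (j : ℤ) * (m : ℤ) + η) = y i then L η else 0)
    (hB : ∀ y : Fin d → ℤ, B y = (s : ℝ≥0∞)⁻¹ * ∑ j ∈ Finset.Icc 1 s, ∏ i,
      (p * ∑' η : ℤ,
          (if rdown (m * s) (v i + (j : ℤ) * (m : ℤ) + η) = y i then Lge η else 0) +
       (1 - p) *
        (if rdown (m * s) (v i + (j : ℤ) * (m : ℤ) - (m : ℤ)) =
            rdown (m * s) (v i + (j : ℤ) * (m : ℤ) + (m : ℤ)) then
          (if y i = rdown (m * s) (v i + (j : ℤ) * (m : ℤ) - (m : ℤ)) then 1 else 0)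
        else
          ∑' η : ℤ,
            (if rdown (m * s) (v i + (j : ℤ) * (m : ℤ) + η) = y i
             then Llt η else 0)))) :
    A = B := by
  have hpt : p ≠ ⊤ := (hp1.trans ENNReal.one_lt_top).ne
  have hq0 : (1 : ℝ≥0∞) - p ≠ 0 := fun h => absurd (tsub_eq_zero_iff_le.mp h) hp1.not_ge
  have hqt : (1 : ℝ≥0∞) - p ≠ ⊤ := (tsub_le_self.trans_lt ENNReal.one_lt_top).ne
  -- key mass identities
  have hmul_ge : ∀ η : ℤ, p * Lge η = (if (m : ℤ) ≤ |η| then L η else 0) := fun η => by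
    rw [hLge η, ENNReal.mul_div_cancel hp0.ne' hpt]
  have hmul_lt : ∀ η : ℤ, (1 - p) * Llt η = (if |η| < (m : ℤ) then L η else 0) := fun η => by
    rw [hLlt η, ENNReal.mul_div_cancel hq0 hqt]
  have hsum_lt : (∑' η : ℤ, (if |η| < (m : ℤ) then L η else 0)) = 1 - p := by
    have hp' : p = ∑' η : ℤ, (if (m : ℤ) ≤ |η| then L η else 0) := by
      rw [hp, PMF.toOuterMeasure_apply]
      congr 1
      funext η
      simp [Set.indicator_apply, Set.mem_setOf_eq]
    have hsplit : (∑' η : ℤ, (if |η| < (m : ℤ) then L η else 0)) + p = 1 := by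
      rw [hp', ← ENNReal.tsum_add, ← L.tsum_coe]
      congr 1
      funext η
      by_cases h : (m : ℤ) ≤ |η|
      · simp [h, not_lt.mpr h]
      · simp [h, lt_of_not_ge h]
    exact ENNReal.eq_sub_of_add_eq hpt hsplit
  apply PMF.ext
  intro y
  rw [hA y, hB y]
  congr 1
  refine Finset.sum_congr rfl fun j _ => Finset.prod_congr rfl fun i _ => ?_
  set w : ℤ := v i + (j : ℤ) * (m : ℤ) with hw
  have hk : 0 < m * s := Nat.mul_pos hm hs
  -- split the L-sum into the two parts
  have hsplit2 : (∑' η : ℤ, if rdown (m * s) (w + η) = y i then L η else 0)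
      = (∑' η : ℤ, if rdown (m * s) (w + η) = y i then (if (m : ℤ) ≤ |η| then L η else 0) else 0)
      + ∑' η : ℤ, (if rdown (m * s) (w + η) = y i then (if |η| < (m : ℤ) then L η else 0) else 0) := by
    rw [← ENNReal.tsum_add]
    congr 1
    funext η
    by_cases hR : rdown (m * s) (w + η) = y i
    · by_cases h : (m : ℤ) ≤ |η|
      · simp [hR, h, not_lt.mpr h]
      · simp [hR, h, lt_of_not_ge h]
    · simp [hR]
  have hge : p * (∑' η : ℤ, if rdown (m * s) (w + η) = y i then Lge η else 0)
      = ∑' η : ℤ, if rdown (m * s) (w + η) = y i then (if (m : ℤ) ≤ |η| then L η else 0) else 0 := by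
    rw [← ENNReal.tsum_mul_left]
    congr 1
    funext η
    by_cases hR : rdown (m * s) (w + η) = y i
    · simp only [hR, if_true]; exact hmul_ge η
    · simp [hR]
  rw [hsplit2, ← hge]
  congr 1
  -- second part
  by_cases hE : rdown (m * s) (w - (m : ℤ)) = rdown (m * s) (w + (m : ℤ))
  · rw [if_pos hE]
    have hRη : ∀ η : ℤ, |η| < (m : ℤ) → rdown (m * s) (w + η) = rdown (m * s) (w - (m : ℤ)) :=
      fun η hη => by
      have := abs_lt.mp hη
      exact rdown_between' hk hE (by omega) (by omega)
    have : (∑' η : ℤ, (if rdown (m * s) (w + η) = y i then (if |η| < (m : ℤ) then L η else 0) else 0))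
        = if y i = rdown (m * s) (w - (m : ℤ)) then ∑' η : ℤ, (if |η| < (m : ℤ) then L η else 0) else 0 := by
      by_cases hy : y i = rdown (m * s) (w - (m : ℤ))
      · rw [if_pos hy]
        congr 1
        funext η
        by_cases hη : |η| < (m : ℤ)
        · rw [hRη η hη, ← hy, if_pos rfl]
        · simp [hη]
      · rw [if_neg hy]
        rw [ENNReal.tsum_eq_zero]
        intro η
        by_cases hη : |η| < (m : ℤ)
        · rw [hRη η hη, if_neg fun h => hy h.symm]
        · simp [hη]
    rw [this, hsum_lt]
    by_cases hy : y i = rdown (m * s) (w - (m : ℤ)) <;> simp [hy]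
  · rw [if_neg hE, ← ENNReal.tsum_mul_left]
    congr 1
    funext η
    by_cases hR : rdown (m * s) (w + η) = y i
    · simp only [hR, if_true]; exact (hmul_lt η).symm
    · simp [hR]
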